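/- Let v ≥ 0 and w ≥ 0 be real numbers, τ > 0, and let a, b ∈ ℂ satisfy b + (iτ/2)·(v + w·|b|²)·b = a − (iτ/2)·(v + w·|a|²)·a. Then |b| = |a|. -/

import Mathlib

/-- Modulus conservation of the Crank–Nicolson discretization of the nonlinear
substep of the Strang splitting for the nonlinear Schrödinger equation:
if `b + (iτ/2)(v + w|b|²)b = a − (iτ/2)(v + w|a|²)a` with `v, w ≥ 0` and `τ > 0`,
then `|b| = |a|`. -/
theorem stmt17 (v w τ : ℝ) (hv : 0 ≤ v) (hw : 0 ≤ w) (hτ : 0 < τ) (a b : ℂ)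
    (h : b + Complex.I * (τ : ℂ) / 2 * ((v : ℂ) + (w : ℂ) * ((‖b‖ : ℝ) : ℂ) ^ 2) * b =
         a - Complex.I * (τ : ℂ) / 2 * ((v : ℂ) + (w : ℂ) * ((‖a‖ : ℝ) : ℂ) ^ 2) * a) :
    ‖b‖ = ‖a‖ := by
  set A : ℝ := ‖a‖ with hA
  set B : ℝ := ‖b‖ with hB
  set α : ℝ := τ / 2 * (v + w * A ^ 2) with hα
  set β : ℝ := τ / 2 * (v + w * B ^ 2) with hβ
  have h' : b * (1 + Complex.I * (β : ℂ)) = a * (1 - Complex.I * (α : ℂ)) := by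
    rw [hα, hβ]
    push_cast
    ring_nf
    ring_nf at h
    linear_combination h
  have key : Complex.normSq b * (1 + β ^ 2) = Complex.normSq a * (1 + α ^ 2) := by
    have h2 := congrArg Complex.normSq h'
    simp only [Complex.normSq_apply, Complex.add_re, Complex.add_im, Complex.sub_re,
      Complex.sub_im, Complex.mul_re, Complex.mul_im, Complex.one_re, Complex.one_im,
      Complex.I_re, Complex.I_im, Complex.ofReal_re, Complex.ofReal_im] at h2 ⊢
    ring_nf at h2 ⊢
    linarith [h2]
  have hnb : Complex.normSq b = B ^ 2 := (Complex.sq_norm b).symm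
  have hna : Complex.normSq a = A ^ 2 := (Complex.sq_norm a).symm
  rw [hnb, hna] at key
  have hA0 : 0 ≤ A := norm_nonneg a
  have hB0 : 0 ≤ B := norm_nonneg b
  have hαβ : β - α = τ / 2 * w * (B ^ 2 - A ^ 2) := by rw [hα, hβ]; ring
  have hα0 : 0 ≤ α := by
    rw [hα]; positivity
  have hβ0 : 0 ≤ β := by
    rw [hβ]; positivity
  clear h h' hnb hna
  clear_value A B α β
  apply le_antisymm
  · by_contra hlt
    push_neg at hlt
    have hsq : A ^ 2 < B ^ 2 := by nlinarith
    have hba : α ≤ β := by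
      nlinarith [mul_nonneg (mul_nonneg hτ.le hw) (by linarith : (0:ℝ) ≤ B ^ 2 - A ^ 2)]
    have h1 : A ^ 2 * (1 + α ^ 2) < B ^ 2 * (1 + α ^ 2) :=
      mul_lt_mul_of_pos_right hsq (by positivity)
    have h2 : B ^ 2 * (1 + α ^ 2) ≤ B ^ 2 * (1 + β ^ 2) := by
      apply mul_le_mul_of_nonneg_left _ (sq_nonneg B)
      nlinarith
    linarith
  · by_contra hlt
    push_neg at hlt
    have hsq : B ^ 2 < A ^ 2 := by nlinarith
    have hba : β ≤ α := by
      nlinarith [mul_nonneg (mul_nonneg hτ.le hw) (by linarith : (0:ℝ) ≤ A ^ 2 - B ^ 2)]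
    have h1 : B ^ 2 * (1 + β ^ 2) < A ^ 2 * (1 + β ^ 2) :=
      mul_lt_mul_of_pos_right hsq (by positivity)
    have h2 : A ^ 2 * (1 + β ^ 2) ≤ A ^ 2 * (1 + α ^ 2) := by
      apply mul_le_mul_of_nonneg_left _ (sq_nonneg A)
      nlinarith
    linarith
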